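/- Let d ≥ 1, let g: ℕ → ℕ be an increasing function, let K₀ ≥ 0 be an integer, and suppose 0 < δ < 2^{-(d+1)}. Then for any odd prime p and any set X ⊆ F_p^d there exist an integer l ∈ {0,1,...,d} and a subset Y ⊆ X with |Y| ≥ (1 - 2^{d+1}δ)|X| such that Y is (K, g(K), δ)-tubular, where K = g^l(K₀) (the l-fold iterate of g applied to K₀, with g^0(K₀) = K₀). -/

import Mathlib

open Finset

/-- The interval `[-K, K] = {-K, ..., K}` regarded as a subset of `ZMod p`. -/
noncomputable def interval (p K : ℕ) : Finset (ZMod p) :=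
  (Finset.Icc (-(K : ℤ)) (K : ℤ)).image (fun k : ℤ => (k : ZMod p))

/-- The linear function `x ↦ a₀ + ∑ i, a i * x i` on `(ZMod p)^d`. -/
def linMap (p d : ℕ) (a₀ : ZMod p) (a : Fin d → ZMod p) (x : Fin d → ZMod p) : ZMod p :=
  a₀ + ∑ i, a i * x i

/-- A function is constant on a set. -/
def ConstOn {p d : ℕ} (f : (Fin d → ZMod p) → ZMod p) (S : Set (Fin d → ZMod p)) : Prop :=
  ∀ x ∈ S, ∀ y ∈ S, f x = f y

/-- A finite set `X ⊆ (ZMod p)^d` is `(K, δ)`-thick along the linear function `x ↦ a₀ + ∑ aᵢxᵢ`: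
at least `δ|X|` of its elements lie outside `H(ξ, K)`. -/
def IsThickAlong {p d : ℕ} (X : Finset (Fin d → ZMod p)) (a₀ : ZMod p)
    (a : Fin d → ZMod p) (K : ℕ) (δ : ℝ) : Prop :=
  δ * (X.card : ℝ) ≤ ((X.filter (fun x => linMap p d a₀ a x ∉ interval p K)).card : ℝ)

/-- Multiset version of `IsThickAlong`, cardinalities counted with multiplicity.  -/
def IsThickAlongM {p d : ℕ} (A : Multiset (Fin d → ZMod p)) (a₀ : ZMod p)
    (a : Fin d → ZMod p) (K : ℕ) (δ : ℝ) : Prop :=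
  δ * (Multiset.card A : ℝ) ≤
    (Multiset.card (A.filter (fun x => linMap p d a₀ a x ∉ interval p K)) : ℝ)

/-- A finite set is `(K, δ)`-thick in its affine hull: it is `(K, δ)`-thick along every
linear function which is not constant on the affine hull of `X`. -/
def IsThickInHull {p d : ℕ} (X : Finset (Fin d → ZMod p)) (K : ℕ) (δ : ℝ) : Prop :=
  ∀ (a₀ : ZMod p) (a : Fin d → ZMod p),
    ¬ ConstOn (linMap p d a₀ a)
        ((affineSpan (ZMod p) (X : Set (Fin d → ZMod p)) : AffineSubspace (ZMod p) (Fin d → ZMod p)) : Set (Fin d → ZMod p)) →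
    IsThickAlong X a₀ a K δ

/-- Multiset version of `IsThickInHull` (the affine hull of the support). -/
def IsThickInHullM {p d : ℕ} (X : Multiset (Fin d → ZMod p)) (K : ℕ) (δ : ℝ) : Prop :=
  ∀ (a₀ : ZMod p) (a : Fin d → ZMod p),
    ¬ ConstOn (linMap p d a₀ a)
        ((affineSpan (ZMod p) (↑X.toFinset : Set (Fin d → ZMod p)) : AffineSubspace (ZMod p) (Fin d → ZMod p)) : Set (Fin d → ZMod p)) →
    IsThickAlongM X a₀ a K δ

/-- A set `X ⊆ (ZMod p)^d` is `(K, K', δ)`-tubular: there are `l ∈ {0,…,d}` and an affine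
isomorphism `ψ` such that `ψX ⊆ [-K,K]^l × (ZMod p)^{d-l}` and `ψX` is `(K', δ)`-thick along
every linear function which is not constant on `{0} × (ZMod p)^{d-l}`. -/
def IsTubular {p d : ℕ} (X : Finset (Fin d → ZMod p)) (K K' : ℕ) (δ : ℝ) : Prop :=
  ∃ l ≤ d, ∃ ψ : (Fin d → ZMod p) ≃ᵃ[ZMod p] (Fin d → ZMod p),
    (∀ x ∈ X, ∀ i : Fin d, (i : ℕ) < l → ψ x i ∈ interval p K) ∧
    ∀ (a₀ : ZMod p) (a : Fin d → ZMod p),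
      ¬ ConstOn (linMap p d a₀ a) {x : Fin d → ZMod p | ∀ i : Fin d, (i : ℕ) < l → x i = 0} →
      IsThickAlong (X.image (fun x => ψ x)) a₀ a K' δ

lemma interval_mono (p : ℕ) {K K' : ℕ} (h : K ≤ K') : interval p K ⊆ interval p K' :=
  Finset.image_subset_image (Finset.Icc_subset_Icc (by simp [h]) (by exact_mod_cast h))

lemma exists_coeff {p d : ℕ} (l : ℕ) (a₀ : ZMod p) (a : Fin d → ZMod p)
    (h : ¬ ConstOn (linMap p d a₀ a) {x : Fin d → ZMod p | ∀ i : Fin d, (i : ℕ) < l → x i = 0}) :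
    ∃ j : Fin d, l ≤ (j : ℕ) ∧ a j ≠ 0 := by
  by_contra hc
  push_neg at hc
  apply h
  intro x hx y hy
  simp only [Set.mem_setOf_eq] at hx hy
  unfold linMap
  congr 1
  apply Finset.sum_congr rfl
  intro i _
  by_cases hi : (i : ℕ) < l
  · rw [hx i hi, hy i hi]
  · rw [hc i (by omega)]
    simp

def elemEquiv {R : Type*} [Field R] {d : ℕ} (l : Fin d) (b : Fin d → R) (hb : b l ≠ 0) :
    (Fin d → R) ≃ₗ[R] (Fin d → R) where
  toFun x i := if i = l then ∑ j, b j * x j else x i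
  invFun y i := if i = l then (y l - ∑ j ∈ Finset.univ.erase l, b j * y j) * (b l)⁻¹ else y i
  map_add' x y := by
    funext i
    by_cases h : i = l <;> simp [h, mul_add, Finset.sum_add_distrib]
  map_smul' c x := by
    funext i
    by_cases h : i = l <;> simp [h, Finset.mul_sum, mul_left_comm]
  left_inv x := by
    funext i
    by_cases h : i = l
    · subst h
      simp only [if_pos rfl]
      have h1 : ∀ j ∈ Finset.univ.erase i,
          b j * (if j = i then ∑ k, b k * x k else x j) = b j * x j := by
        intro j hj
        rw [if_neg (Finset.mem_erase.mp hj).1]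
      rw [Finset.sum_congr rfl h1, ← Finset.add_sum_erase _ (fun j => b j * x j) (Finset.mem_univ i)]
      field_simp
      simp only [if_true, ite_true, ↓reduceIte, add_sub_cancel_right]
      exact mul_div_cancel_left₀ _ hb
    · simp [h]
  right_inv y := by
    funext i
    by_cases h : i = l
    · subst h
      simp only [if_pos rfl]
      have h1 : ∀ j ∈ Finset.univ.erase i,
          b j * (if j = i then (y i - ∑ k ∈ Finset.univ.erase i, b k * y k) * (b i)⁻¹ else y j)
            = b j * y j := by
        intro j hj
        rw [if_neg (Finset.mem_erase.mp hj).1]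
      rw [← Finset.add_sum_erase _ _ (Finset.mem_univ i), Finset.sum_congr rfl h1,
        if_pos rfl, mul_comm (b i), mul_assoc, inv_mul_cancel₀ hb, mul_one, sub_add_cancel]
      simp
    · simp [h]

@[simp] lemma elemEquiv_apply {R : Type*} [Field R] {d : ℕ} (l : Fin d) (b : Fin d → R)
    (hb : b l ≠ 0) (x : Fin d → R) (i : Fin d) :
    elemEquiv l b hb x i = if i = l then ∑ j, b j * x j else x i := rfl

lemma tube_aux (d : ℕ) (g : ℕ → ℕ) (hg : StrictMono g) (K₀ : ℕ)
    (δ : ℝ) (hδ0 : 0 < δ) (hδ1 : δ < 1)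
    (p : ℕ) (hp : p.Prime) :
    ∀ n l, l + n = d →
    ∀ (Y : Finset (Fin d → ZMod p)) (ψ : (Fin d → ZMod p) ≃ᵃ[ZMod p] (Fin d → ZMod p)),
      (∀ x ∈ Y, ∀ i : Fin d, (i : ℕ) < l → ψ x i ∈ interval p (g^[l] K₀)) →
      ∃ l', l ≤ l' ∧ l' ≤ d ∧ ∃ Z ⊆ Y,
        (1 - δ) ^ (l' - l) * (Y.card : ℝ) ≤ (Z.card : ℝ) ∧
        IsTubular Z (g^[l'] K₀) (g (g^[l'] K₀)) δ := by
  haveI : Fact p.Prime := ⟨hp⟩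
  intro n
  induction n with
  | zero =>
    intro l hl Y ψ hbox
    have hl' : l = d := by omega
    subst hl'
    refine ⟨l, le_rfl, le_rfl, Y, subset_rfl, by simp, l, le_rfl, ψ, hbox, ?_⟩
    intro a₀ a hnc
    exfalso
    apply hnc
    intro x hx y hy
    simp only [Set.mem_setOf_eq] at hx hy
    have hxy : x = y := funext fun i => by rw [hx i i.isLt, hy i i.isLt]
    rw [hxy]
  | succ n ih =>
    intro l hl Y ψ hbox
    have hld : l < d := by omega
    by_cases hth : ∀ (a₀ : ZMod p) (a : Fin d → ZMod p),
        ¬ ConstOn (linMap p d a₀ a) {x : Fin d → ZMod p | ∀ i : Fin d, (i : ℕ) < l → x i = 0} →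
        IsThickAlong (Y.image (fun x => ψ x)) a₀ a (g (g^[l] K₀)) δ
    · exact ⟨l, le_rfl, by omega, Y, subset_rfl, by simp, l, by omega, ψ, hbox, hth⟩
    · push_neg at hth
      obtain ⟨a₀, a, hnc, hnt⟩ := hth
      rw [IsThickAlong, not_le] at hnt
      obtain ⟨j, hjl, hja⟩ := exists_coeff l a₀ a hnc
      set L : Fin d := ⟨l, hld⟩ with hLdef
      set σ : Equiv.Perm (Fin d) := Equiv.swap L j with hσdef
      set b : Fin d → ZMod p := fun i => a (σ i) with hbdef
      have hbL : b L ≠ 0 := by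
        simpa [hbdef, hσdef, Equiv.swap_apply_left] using hja
      set φ : (Fin d → ZMod p) ≃ᵃ[ZMod p] (Fin d → ZMod p) :=
        (((LinearEquiv.funCongrLeft (ZMod p) (ZMod p) σ).toAffineEquiv).trans
          (elemEquiv L b hbL).toAffineEquiv).trans
          (AffineEquiv.constVAdd (ZMod p) (Fin d → ZMod p) (fun i => if i = L then a₀ else 0))
        with hφdef
      have hLl : (L : ℕ) = l := rfl
      have hφapp : ∀ (y : Fin d → ZMod p) (i : Fin d),
          φ y i = (if i = L then a₀ else 0)
            + (if i = L then ∑ k, b k * y (σ k) else y (σ i)) := fun y i => rfl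
      have hφ1 : ∀ y : Fin d → ZMod p, φ y L = linMap p d a₀ a y := by
        intro y
        have hsum : ∑ k, b k * y (σ k) = ∑ k, a k * y k :=
          Equiv.sum_comp σ (fun k => a k * y k)
        rw [hφapp, if_pos rfl, if_pos rfl, hsum]
        rfl
      have hφ2 : ∀ (y : Fin d → ZMod p) (i : Fin d), (i : ℕ) < l → φ y i = y i := by
        intro y i hi
        have hiL : i ≠ L := by
          intro h; rw [h] at hi; omega
        have hij : i ≠ j := by
          intro h; rw [h] at hi; omega
        rw [hφapp, if_neg hiL, if_neg hiL, hσdef, Equiv.swap_apply_of_ne_of_ne hiL hij, zero_add]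
      set ψ' := ψ.trans φ with hψ'def
      set K' := g (g^[l] K₀) with hK'def
      set Y' := Y.filter (fun y => linMap p d a₀ a (ψ y) ∈ interval p K') with hY'def
      have hinj : Function.Injective (fun x : Fin d → ZMod p => ψ x) := ψ.injective
      have h1 : ((Y.image (fun x => ψ x)).filter
            (fun x => linMap p d a₀ a x ∉ interval p K')).card
          = (Y.filter (fun y => linMap p d a₀ a (ψ y) ∉ interval p K')).card := by
        rw [Finset.filter_image, Finset.card_image_of_injective _ hinj]
      have h2 : (Y.image (fun x => ψ x)).card = Y.card :=
        Finset.card_image_of_injective _ hinj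
      have h3 : Y'.card + (Y.filter (fun y => ¬ (linMap p d a₀ a (ψ y) ∈ interval p K'))).card
          = Y.card := Finset.card_filter_add_card_filter_not _
      have hY'card : (1 - δ) * (Y.card : ℝ) ≤ (Y'.card : ℝ) := by
        rw [h1, h2] at hnt
        have : ((Y.filter (fun y => linMap p d a₀ a (ψ y) ∉ interval p K')).card : ℝ)
            < δ * (Y.card : ℝ) := hnt
        have h3' : (Y'.card : ℝ)
            + ((Y.filter (fun y => linMap p d a₀ a (ψ y) ∉ interval p K')).card : ℝ)
            = (Y.card : ℝ) := by exact_mod_cast h3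
        nlinarith [Nat.cast_nonneg (α := ℝ) Y.card]
      have hbox' : ∀ x ∈ Y', ∀ i : Fin d, (i : ℕ) < l + 1 →
          ψ' x i ∈ interval p (g^[l + 1] K₀) := by
        intro x hx i hi
        have hK : g^[l] K₀ ≤ g^[l + 1] K₀ := by
          rw [Function.iterate_succ_apply']; exact hg.le_apply
        have hmem : x ∈ Y := Finset.mem_of_mem_filter _ hx
        rcases Nat.lt_or_ge (i : ℕ) l with h | h
        · have : ψ' x i = ψ x i := hφ2 (ψ x) i h
          rw [this]
          exact interval_mono p hK (hbox x hmem i h)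
        · have hiL : i = L := Fin.ext (by omega)
          subst hiL
          have : ψ' x L = linMap p d a₀ a (ψ x) := hφ1 (ψ x)
          rw [this, Function.iterate_succ_apply']
          exact (Finset.mem_filter.mp hx).2
      obtain ⟨l', hl1, hl2, Z, hZY', hZcard, htub⟩ := ih (l + 1) (by omega) Y' ψ' hbox'
      refine ⟨l', by omega, hl2, Z, hZY'.trans (Finset.filter_subset _ _), ?_, htub⟩
      have hδ' : (0:ℝ) ≤ 1 - δ := by linarith
      have hll : l' - l = (l' - (l + 1)) + 1 := by omega
      calc (1 - δ) ^ (l' - l) * (Y.card : ℝ)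
          = (1 - δ) ^ (l' - (l + 1)) * ((1 - δ) * (Y.card : ℝ)) := by rw [hll, pow_succ]; ring
        _ ≤ (1 - δ) ^ (l' - (l + 1)) * (Y'.card : ℝ) :=
            mul_le_mul_of_nonneg_left hY'card (pow_nonneg hδ' _)
        _ ≤ (Z.card : ℝ) := hZcard

/-- Lemma `tube`: if `0 < δ < 2^{-(d+1)}`, then for any odd prime `p` and any
set `X ⊆ 𝔽_p^d` there are `l ∈ {0,…,d}` and `Y ⊆ X` with `|Y| ≥ (1 - 2^{d+1}δ)|X|` such that
`Y` is `(K, g(K), δ)`-tubular, where `K = g^[l](K₀)`. -/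
theorem tube_lemma (d : ℕ) (hd : 1 ≤ d) (g : ℕ → ℕ) (hg : StrictMono g) (K₀ : ℕ)
    (δ : ℝ) (hδ0 : 0 < δ) (hδ1 : δ < ((2 : ℝ) ^ (d + 1))⁻¹)
    (p : ℕ) (hp : p.Prime) (hodd : Odd p)
    (X : Finset (Fin d → ZMod p)) :
    ∃ l ≤ d, ∃ Y ⊆ X,
      (1 - 2 ^ (d + 1) * δ) * (X.card : ℝ) ≤ (Y.card : ℝ) ∧
      IsTubular Y (g^[l] K₀) (g (g^[l] K₀)) δ := by
  have h2pow : (1 : ℝ) ≤ 2 ^ (d + 1) := one_le_pow₀ (by norm_num)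
  have hδ1' : δ < 1 := lt_of_lt_of_le hδ1 (inv_le_one_of_one_le₀ h2pow)
  obtain ⟨l, hl0, hld, Z, hZX, hcard, htub⟩ :=
    tube_aux d g hg K₀ δ hδ0 hδ1' p hp d 0 (by omega) X (AffineEquiv.refl _ _)
      (by intro x hx i hi; omega)
  refine ⟨l, hld, Z, hZX, ?_, htub⟩
  refine le_trans ?_ hcard
  apply mul_le_mul_of_nonneg_right _ (Nat.cast_nonneg _)
  have hbern : (1 : ℝ) - (l : ℝ) * δ ≤ (1 - δ) ^ l := by
    have := one_add_mul_le_pow (a := -δ) (by linarith) l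
    have h' : (1 : ℝ) + (l : ℝ) * (-δ) = 1 - (l : ℝ) * δ := by ring
    rw [h'] at this
    rwa [← sub_eq_add_neg] at this
  have hle : (l : ℝ) * δ ≤ 2 ^ (d + 1) * δ := by
    apply mul_le_mul_of_nonneg_right _ hδ0.le
    calc (l : ℝ) ≤ (d : ℝ) := by exact_mod_cast hld
      _ ≤ 2 ^ (d + 1) := by
          have : d ≤ 2 ^ (d + 1) := le_of_lt (lt_of_lt_of_le (Nat.lt_two_pow_self (n := d))
            (Nat.pow_le_pow_right (by norm_num) (Nat.le_succ d)))
          exact_mod_cast this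
  simp only [Nat.sub_zero]
  linarith
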